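/- Let W = (ω_1,…,ω_n) be any K(x)-vector-space basis of A, and let e ∈ K[x] and M ∈ K[x]^{n×n} satisfy eW′ = MW. Let a ∈ K̄. If there exists some ω in W such that a is a branch point of ω, then a is a root of e. -/

import Mathlib

noncomputable section
open scoped Classical

open Polynomial

/-- Termwise derivative (w.r.t. `x`) of a generalized (Hahn/Puiseux) series in `x - a`:
the exponent-`q` coefficient of `P'` is `(q+1)` times the exponent-`(q+1)` coefficient of `P`. -/
def hderiv {F : Type} [Field F] (P : HahnSeries ℚ F) : HahnSeries ℚ F where
  coeff q := ((q + 1 : ℚ) : F) * P.coeff (q + 1)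
  isPWO_support' := by
    have hsub : (Function.support fun q : ℚ => ((q + 1 : ℚ) : F) * P.coeff (q + 1))
        ⊆ (fun q : ℚ => q - 1) '' P.support := by
      intro q hq
      refine ⟨q + 1, ?_, by ring⟩
      intro h0
      simp [Function.mem_support, h0] at hq
    exact (P.isPWO_support.image_of_monotoneOn
      (fun x _ y _ hxy => by simpa using hxy)).mono hsub

/-- The valuation of a generalized (Hahn/Puiseux) series: the least exponent occurring,
and `⊤` for the zero series. -/
def hval {F : Type} [Field F] (P : HahnSeries ℚ F) : WithTop ℚ :=
  if h : P = 0 then ⊤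
  else ((P.isWF_support.min (HahnSeries.support_nonempty_iff.mpr h) : ℚ) : WithTop ℚ)

/-- A series is ramified if some exponent in its support is not an integer. -/
def Ramified {F : Type} [Field F] (P : HahnSeries ℚ F) : Prop :=
  ∃ q ∈ P.support, ∀ z : ℤ, (z : ℚ) ≠ q

/-- The set of fractional (non-integer) exponents occurring in a series. -/
def fracSupport {F : Type} [Field F] (P : HahnSeries ℚ F) : Set ℚ :=
  {q | q ∈ P.support ∧ ∀ z : ℤ, (z : ℚ) ≠ q}

/-- The minimal fractional exponent `δ(P)` of a series; `⊤` if `P` is not ramified. -/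
def delta {F : Type} [Field F] (P : HahnSeries ℚ F) : WithTop ℚ :=
  if h : (fracSupport P).Nonempty then
    (((P.isWF_support.mono (fun q hq => hq.1)).min h : ℚ) : WithTop ℚ)
  else ⊤

/-- A Hahn series over `ℚ` is a Puiseux series if its exponents have a common denominator. -/
def IsPuiseux {F : Type} [Field F] (P : HahnSeries ℚ F) : Prop :=
  ∃ r : ℕ, 0 < r ∧ ∀ q ∈ P.support, ∃ z : ℤ, (z : ℚ) / r = q

/-! ### The algebraic function field `A = K(x)[y]/⟨m⟩` -/

/-- The canonical image in `A = K(x)[y]/⟨m⟩` of a polynomial `p ∈ K[x]`. -/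
def toA {K : Type} [Field K] (m : Polynomial (RatFunc K)) (p : Polynomial K) :
    AdjoinRoot m :=
  algebraMap (RatFunc K) (AdjoinRoot m) (algebraMap (Polynomial K) (RatFunc K) p)

/-- `D` is the derivation on `A = K(x)[y]/⟨m⟩` extending `d/dx` on `K(x)`:
it is additive, satisfies the Leibniz rule, and restricts to `d/dx` on `K[x]`
(hence, being a derivation on a field, on all of `K(x)`). -/
structure IsDerivationOnA {K : Type} [Field K] (m : Polynomial (RatFunc K))
    (D : AdjoinRoot m → AdjoinRoot m) : Prop where
  map_add : ∀ f g, D (f + g) = D f + D g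
  leibniz : ∀ f g, D (f * g) = f * D g + g * D f
  map_poly : ∀ p : Polynomial K, D (toA m p) = toA m (Polynomial.derivative p)

/-- `W` is a basis of `A` as a vector space over `K(x)`. -/
def IsKxBasis {K : Type} [Field K] {m : Polynomial (RatFunc K)}
    (W : Fin m.natDegree → AdjoinRoot m) : Prop :=
  LinearIndependent (RatFunc K) W ∧ Submodule.span (RatFunc K) (Set.range W) = ⊤

/-- `e W′ = M W` componentwise. -/
def DerivRel {K : Type} [Field K] {m : Polynomial (RatFunc K)}
    (D : AdjoinRoot m → AdjoinRoot m) (W : Fin m.natDegree → AdjoinRoot m)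
    (e : Polynomial K) (M : Matrix (Fin m.natDegree) (Fin m.natDegree) (Polynomial K)) : Prop :=
  ∀ i, toA m e * D (W i) = ∑ j, toA m (M i j) * W j

/-- `gcd(e, m₁₁, …, mₙₙ) = 1`: the only common divisors of `e` and the entries of `M`
are units. -/
def GcdOne {K : Type} [Field K] {n : ℕ}
    (e : Polynomial K) (M : Matrix (Fin n) (Fin n) (Polynomial K)) : Prop :=
  ∀ p : Polynomial K, p ∣ e → (∀ i j, p ∣ M i j) → IsUnit p

/-! ### Puiseux expansions around a point `a` of the algebraic closure -/

/-- The family of the `n` distinct `K(x)`-embeddings of `A = K(x)[y]/⟨m⟩` into the field of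
Puiseux series around a point `a`: each embedding is a ring homomorphism into the Hahn series
field whose values are Puiseux series, sending constants `c ∈ K` to constant series and the
rational function `x` to `a + (x - a)`, i.e. to the series `a + t` where `t` stands
for `x - a`. -/
structure EmbFamily (K F : Type) [Field K] [Field F] [Algebra K F]
    (m : Polynomial (RatFunc K)) (a : F) where
  emb : Fin m.natDegree → (AdjoinRoot m →+* HahnSeries ℚ F)
  emb_injective : Function.Injective emb
  emb_C : ∀ i (c : K), emb i (toA m (Polynomial.C c)) = HahnSeries.single 0 (algebraMap K F c)
  emb_X : ∀ i, emb i (toA m Polynomial.X) =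
    HahnSeries.single 0 a + HahnSeries.single 1 1
  emb_puiseux : ∀ i f, IsPuiseux (emb i f)

/-- The embeddings around `a` are differential homomorphisms: they intertwine the derivation
`D` on `A` with the termwise derivative of series. -/
def IsDiffFamily {K F : Type} [Field K] [Field F] [Algebra K F]
    {m : Polynomial (RatFunc K)} {a : F} (D : AdjoinRoot m → AdjoinRoot m)
    (σ : EmbFamily K F m a) : Prop :=
  ∀ i f, σ.emb i (D f) = hderiv (σ.emb i f)

/-- `f ∈ A` is locally integral at `a`, i.e. `val_a(f) ≥ 0`: all Puiseux series associated
to `f` around `a` have nonnegative valuation. -/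
def LocIntegralAt {K F : Type} [Field K] [Field F] [Algebra K F]
    {m : Polynomial (RatFunc K)} {a : F} (σ : EmbFamily K F m a)
    (f : AdjoinRoot m) : Prop :=
  ∀ i, 0 ≤ hval (σ.emb i f)

/-- `a` is a branch point of `f ∈ A`: one of the Puiseux series associated to `f` around `a`
is ramified. -/
def IsBranchPointOf {K F : Type} [Field K] [Field F] [Algebra K F]
    {m : Polynomial (RatFunc K)} {a : F} (σ : EmbFamily K F m a)
    (f : AdjoinRoot m) : Prop :=
  ∃ i, Ramified (σ.emb i f)

/-- `f ∈ A` is (globally) integral: locally integral at every point `a` of the algebraic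
closure of `K` (given the system `σ` of Puiseux expansions around each point). -/
def IntegralElem {K : Type} [Field K] {m : Polynomial (RatFunc K)}
    (σ : ∀ a : AlgebraicClosure K, EmbFamily K (AlgebraicClosure K) m a)
    (f : AdjoinRoot m) : Prop :=
  ∀ a, LocIntegralAt (σ a) f

/-- `W` is an integral basis of `A`: a `K(x)`-vector-space basis consisting of integral
elements such that every integral element is a `K[x]`-linear combination of `W`. -/
def IsIntegralBasis {K : Type} [Field K] {m : Polynomial (RatFunc K)}
    (σ : ∀ a : AlgebraicClosure K, EmbFamily K (AlgebraicClosure K) m a)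
    (W : Fin m.natDegree → AdjoinRoot m) : Prop :=
  IsKxBasis W ∧ (∀ i, IntegralElem σ (W i)) ∧
    ∀ f, IntegralElem σ f → ∃ c : Fin m.natDegree → Polynomial K,
      f = ∑ i, toA m (c i) * W i

/-- The rational function `r ∈ K(x)` has no pole at `a`: `r = p/q` with `q(a) ≠ 0`. -/
def NoPoleAt {K F : Type} [Field K] [Field F] [Algebra K F] (a : F) (r : RatFunc K) : Prop :=
  ∃ p q : Polynomial K, Polynomial.aeval a q ≠ 0 ∧
    r * algebraMap (Polynomial K) (RatFunc K) q = algebraMap (Polynomial K) (RatFunc K) p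

/-- `W` is a local integral basis of `A` at `a`: a `K(x)`-vector-space basis consisting of
elements that are locally integral at `a`, such that every element of `A` that is locally
integral at `a` is a linear combination of `W` with coefficients in `K(x)_a` (rational
functions without a pole at `a`). -/
def IsLocalIntegralBasisAt {K F : Type} [Field K] [Field F] [Algebra K F]
    {m : Polynomial (RatFunc K)} {a : F} (σ : EmbFamily K F m a)
    (W : Fin m.natDegree → AdjoinRoot m) : Prop :=
  IsKxBasis W ∧ (∀ i, LocIntegralAt σ (W i)) ∧
    ∀ f, LocIntegralAt σ f → ∃ c : Fin m.natDegree → RatFunc K,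
      (∀ i, NoPoleAt a (c i)) ∧ f = ∑ i, algebraMap (RatFunc K) (AdjoinRoot m) (c i) * W i

/-! ### Auxiliary lemmas -/

/-- A series has support contained in the natural numbers. -/
def NatSupp {F : Type} [Field F] (P : HahnSeries ℚ F) : Prop :=
  ∀ q ∈ P.support, ∃ n : ℕ, (n : ℚ) = q

lemma natSupp_add {F : Type} [Field F] {P Q : HahnSeries ℚ F}
    (hP : NatSupp P) (hQ : NatSupp Q) : NatSupp (P + Q) := by
  intro q hq
  rcases HahnSeries.support_add_subset _ _ hq with h | h
  exacts [hP q h, hQ q h]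

lemma natSupp_mul {F : Type} [Field F] {P Q : HahnSeries ℚ F}
    (hP : NatSupp P) (hQ : NatSupp Q) : NatSupp (P * Q) := by
  intro q hq
  rcases HahnSeries.support_mul_subset hq with ⟨q1, h1, q2, h2, rfl⟩
  obtain ⟨n1, hn1⟩ := hP q1 h1
  obtain ⟨n2, hn2⟩ := hQ q2 h2
  exact ⟨n1 + n2, by push_cast [← hn1, ← hn2]; ring⟩

lemma natSupp_single {F : Type} [Field F] {q0 : ℚ} (hq0 : ∃ n : ℕ, (n : ℚ) = q0)
    (r : F) : NatSupp (HahnSeries.single q0 r) := by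
  intro q hq
  have := HahnSeries.support_single_subset hq
  rw [Set.mem_singleton_iff] at this
  exact this ▸ hq0

lemma coeff_zero_mul {F : Type} [Field F] {P Q : HahnSeries ℚ F}
    (hP : NatSupp P) (hQ : NatSupp Q) :
    (P * Q).coeff 0 = P.coeff 0 * Q.coeff 0 := by
  rw [HahnSeries.coeff_mul]
  have hsub : Finset.antidiagonal P.isPWO_support Q.isPWO_support 0
      ⊆ {((0 : ℚ), (0 : ℚ))} := by
    intro x hx
    rw [Finset.mem_antidiagonal] at hx
    obtain ⟨n1, hn1⟩ := hP x.1 hx.1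
    obtain ⟨n2, hn2⟩ := hQ x.2 hx.2.1
    have h0 : (n1 : ℚ) + (n2 : ℚ) = 0 := by rw [hn1, hn2]; exact hx.2.2
    have hn1' : (0 : ℚ) ≤ n1 := Nat.cast_nonneg _
    have hn2' : (0 : ℚ) ≤ n2 := Nat.cast_nonneg _
    have e1 : x.1 = 0 := by rw [← hn1]; linarith
    have e2 : x.2 = 0 := by rw [← hn2]; linarith
    simp [Prod.ext_iff, e1, e2]
  rcases Finset.subset_singleton_iff.mp hsub with h | h
  · rw [h, Finset.sum_empty]
    by_cases h1 : P.coeff 0 = 0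
    · simp [h1]
    by_cases h2 : Q.coeff 0 = 0
    · simp [h2]
    exfalso
    have : ((0 : ℚ), (0 : ℚ)) ∈ Finset.antidiagonal P.isPWO_support Q.isPWO_support 0 :=
      Finset.mem_antidiagonal.mpr ⟨h1, h2, by ring⟩
    rw [h] at this
    simp at this
  · rw [h, Finset.sum_singleton]

lemma toA_add {K : Type} [Field K] (m : Polynomial (RatFunc K)) (p q : Polynomial K) :
    toA m (p + q) = toA m p + toA m q := by simp [toA, map_add]

lemma toA_mul {K : Type} [Field K] (m : Polynomial (RatFunc K)) (p q : Polynomial K) :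
    toA m (p * q) = toA m p * toA m q := by simp [toA, map_mul]

/-- The image under an embedding of (the image in `A` of) a polynomial has support in `ℕ`
and its constant coefficient is the value of the polynomial at `a`. -/
lemma emb_toA_poly {K F : Type} [Field K] [Field F] [Algebra K F]
    {m : Polynomial (RatFunc K)} {a : F} (σ : EmbFamily K F m a) (ι : Fin m.natDegree)
    (p : Polynomial K) :
    NatSupp (σ.emb ι (toA m p)) ∧
      (σ.emb ι (toA m p)).coeff 0 = Polynomial.aeval a p := by
  have hZnat : NatSupp ((HahnSeries.single (0:ℚ) a) + HahnSeries.single (1:ℚ) (1:F)) :=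
    natSupp_add (natSupp_single ⟨0, by norm_num⟩ _) (natSupp_single ⟨1, by norm_num⟩ _)
  have hZ0 : ((HahnSeries.single (0:ℚ) a) + HahnSeries.single (1:ℚ) (1:F)).coeff 0 = a := by
    rw [HahnSeries.coeff_add, HahnSeries.coeff_single_same,
      HahnSeries.coeff_single_of_ne (by norm_num), add_zero]
  induction p using Polynomial.induction_on with
  | C c =>
      rw [σ.emb_C]
      constructor
      · exact natSupp_single ⟨0, by norm_num⟩ _
      · rw [HahnSeries.coeff_single_same, Polynomial.aeval_C]
  | add p q hp hq =>
      rw [toA_add, map_add]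
      constructor
      · exact natSupp_add hp.1 hq.1
      · rw [HahnSeries.coeff_add, hp.2, hq.2, map_add]
  | monomial n c ih =>
      have hsplit : (Polynomial.C c) * Polynomial.X ^ (n + 1)
          = (Polynomial.C c * Polynomial.X ^ n) * Polynomial.X := by ring
      rw [hsplit, toA_mul, map_mul, σ.emb_X]
      constructor
      · exact natSupp_mul ih.1 hZnat
      · rw [coeff_zero_mul ih.1 hZnat, ih.2, hZ0]
        simp [mul_assoc, pow_succ]

set_option synthInstance.maxHeartbeats 1000000 in
/-- Let `W = (ω₁,…,ωₙ)` be any `K(x)`-vector-space basis of `A`, and let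
`e ∈ K[x]` and `M ∈ K[x]^{n×n}` satisfy `eW′ = MW`. Let `a ∈ K̄`. If there exists some `ω`
in `W` such that `a` is a branch point of `ω`, then `a` is a root of `e`. -/
theorem root_of_e_of_branch_point {K : Type} [Field K] [CharZero K]
    (m : Polynomial (RatFunc K)) [Fact (Irreducible m)]
    (D : AdjoinRoot m → AdjoinRoot m) (hD : IsDerivationOnA m D)
    (W : Fin m.natDegree → AdjoinRoot m) (hW : IsKxBasis W)
    (e : Polynomial K) (M : Matrix (Fin m.natDegree) (Fin m.natDegree) (Polynomial K))
    (hrel : DerivRel D W e M)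
    (a : AlgebraicClosure K) (σa : EmbFamily K (AlgebraicClosure K) m a)
    (hσa : IsDiffFamily D σa)
    (hbp : ∃ i, IsBranchPointOf σa (W i)) :
    Polynomial.aeval a e = 0 := by
  classical
  have hFchar : CharZero (AlgebraicClosure K) :=
    charZero_of_injective_algebraMap (algebraMap K (AlgebraicClosure K)).injective
  by_contra hea
  obtain ⟨i0, ι, hram⟩ := hbp
  -- choose the basis element with minimal fractional exponent
  obtain ⟨k0, -, hk0⟩ := Finset.exists_min_image Finset.univ
    (fun k => delta (σa.emb ι (W k))) ⟨i0, Finset.mem_univ _⟩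
  set P := σa.emb ι (W k0) with hPdef
  have hfi : (fracSupport (σa.emb ι (W i0))).Nonempty := by
    obtain ⟨q, hq1, hq2⟩ := hram; exact ⟨q, hq1, hq2⟩
  have hne : (fracSupport P).Nonempty := by
    by_contra h
    have htop : delta P = ⊤ := by rw [delta, dif_neg h]
    have hle := hk0 i0 (Finset.mem_univ _)
    rw [htop, top_le_iff, delta, dif_pos hfi] at hle
    exact WithTop.coe_ne_top hle
  set d : ℚ := (P.isWF_support.mono (fun q hq => hq.1)).min hne with hddef
  have hdelta : delta P = (d : WithTop ℚ) := by rw [delta, dif_pos hne]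
  have hdmem : d ∈ fracSupport P := Set.IsWF.min_mem _ hne
  have hdsupp : P.coeff d ≠ 0 := hdmem.1
  have hdni : ∀ z : ℤ, (z : ℚ) ≠ d := hdmem.2
  have hd0 : d ≠ 0 := fun h => hdni 0 (by rw [h]; norm_num)
  -- minimality across all basis elements
  have hmin : ∀ k, ∀ q ∈ fracSupport (σa.emb ι (W k)), d ≤ q := by
    intro k q hq
    have hnk : (fracSupport (σa.emb ι (W k))).Nonempty := ⟨q, hq⟩
    have h1 := hk0 k (Finset.mem_univ _)
    rw [hdelta, delta, dif_pos hnk, WithTop.coe_le_coe] at h1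
    exact le_trans h1 (Set.IsWF.min_le _ hnk hq)
  -- apply the embedding to the derivation relation
  set E := σa.emb ι (toA m e) with hEdef
  set Q := hderiv P with hQdef
  have heq : E * Q = ∑ k, σa.emb ι (toA m (M k0 k)) * σa.emb ι (W k) := by
    have h1 := congrArg (σa.emb ι) (hrel k0)
    rw [map_mul, map_sum] at h1
    simp only [map_mul] at h1
    rw [hσa ι (W k0)] at h1
    exact h1
  have hE := emb_toA_poly σa ι e
  have hE0 : E.coeff 0 ≠ 0 := by rw [hEdef, hE.2]; exact hea
  -- the coefficient of Q at d - 1 is nonzero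
  have hQcoeff : ∀ q : ℚ, Q.coeff q = ((q + 1 : ℚ) : AlgebraicClosure K) * P.coeff (q + 1) :=
    fun q => rfl
  have hQd : Q.coeff (d - 1) ≠ 0 := by
    rw [hQcoeff, sub_add_cancel]
    exact mul_ne_zero (Rat.cast_ne_zero.mpr hd0) hdsupp
  -- any exponent q2 in the support of Q that combines with a natural number to d-1 is d-1
  have hQfrac : ∀ q2 ∈ Q.support, ∀ n : ℕ, (n : ℚ) + q2 = d - 1 → (n : ℚ) = 0 := by
    intro q2 hq2 n hn
    have hP2 : P.coeff (q2 + 1) ≠ 0 := by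
      intro h
      rw [HahnSeries.mem_support, hQcoeff, h, mul_zero] at hq2
      exact hq2 rfl
    have hq2ni : ∀ z : ℤ, (z : ℚ) ≠ q2 + 1 := by
      intro z hz
      refine hdni (z + n) ?_
      push_cast
      linarith
    have : q2 + 1 ∈ fracSupport P := ⟨hP2, hq2ni⟩
    have hle := hmin k0 _ this
    have hn' : (0 : ℚ) ≤ n := Nat.cast_nonneg _
    linarith
  -- coefficient of the LHS at d - 1
  have hLHS : (E * Q).coeff (d - 1) = E.coeff 0 * Q.coeff (d - 1) := by
    rw [HahnSeries.coeff_mul]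
    have hsub : Finset.antidiagonal E.isPWO_support Q.isPWO_support (d - 1)
        ⊆ {((0 : ℚ), d - 1)} := by
      intro x hx
      rw [Finset.mem_antidiagonal] at hx
      obtain ⟨n, hn⟩ := hE.1 x.1 hx.1
      have e1 : (n : ℚ) = 0 := hQfrac x.2 hx.2.1 n (by rw [hn]; exact hx.2.2)
      have hx1 : x.1 = 0 := by rw [← hn, e1]
      have hx2 : x.2 = d - 1 := by have := hx.2.2; rw [hx1] at this; linarith
      simp [Prod.ext_iff, hx1, hx2]
    rcases Finset.subset_singleton_iff.mp hsub with h | h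
    · exfalso
      have hmem : ((0 : ℚ), d - 1) ∈
          Finset.antidiagonal E.isPWO_support Q.isPWO_support (d - 1) :=
        Finset.mem_antidiagonal.mpr ⟨hE0, hQd, by ring⟩
      rw [h] at hmem
      simp at hmem
    · rw [h, Finset.sum_singleton]
  -- coefficient of the RHS at d - 1 vanishes
  have hRHS : ∀ k, (σa.emb ι (toA m (M k0 k)) * σa.emb ι (W k)).coeff (d - 1) = 0 := by
    intro k
    by_contra h
    have hsupp : (d - 1) ∈ (σa.emb ι (toA m (M k0 k)) * σa.emb ι (W k)).support := h
    rcases HahnSeries.support_mul_subset hsupp with ⟨q1, h1, q2, h2, hsum⟩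
    obtain ⟨n, hn⟩ := (emb_toA_poly σa ι (M k0 k)).1 q1 h1
    have hsum' : (n : ℚ) + q2 = d - 1 := by rw [hn]; exact hsum
    have hq2ni : ∀ z : ℤ, (z : ℚ) ≠ q2 := by
      intro z hz
      refine hdni (z + 1 + n) ?_
      push_cast
      linarith
    have hfr : q2 ∈ fracSupport (σa.emb ι (W k)) := ⟨h2, hq2ni⟩
    have hle := hmin k _ hfr
    have hn' : (0 : ℚ) ≤ n := Nat.cast_nonneg _
    linarith
  -- contradiction
  have hco := congrArg (HahnSeries.coeff.addMonoidHom (d - 1)) heq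
  rw [map_sum] at hco
  have hzero : (HahnSeries.coeff.addMonoidHom (Γ := ℚ) (R := AlgebraicClosure K) (d - 1))
      (E * Q) = 0 := by
    rw [hco]
    exact Finset.sum_eq_zero fun k _ => hRHS k
  have : (E * Q).coeff (d - 1) = 0 := hzero
  rw [hLHS] at this
  exact (mul_ne_zero hE0 hQd) this
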